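/- Let V and W be finite-dimensional complex vector spaces equipped with quaternionic structures J_V and J_W respectively, and let f : V → W be a ℂ-linear map satisfying f ∘ J_V = J_W ∘ f. Then the complex dimensions finrank ℂ (ker f) and finrank ℂ (W ⧸ range f) are both even; in particular, the index (finrank ℂ (ker f) : ℤ) - (finrank ℂ (W ⧸ range f) : ℤ) is an even integer. -/

import Mathlib

theorem even_finrank_of_quaternionic {V : Type*} [AddCommGroup V] [Module ℂ V]
    [FiniteDimensional ℂ V] (J : V →ₗ[ℝ] V)
    (hJ2 : ∀ v, J (J v) = -v)
    (hJc : ∀ (z : ℂ) (v : V), J (z • v) = (starRingEnd ℂ z) • J v) :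
    Even (Module.finrank ℂ V) := by
  classical
  let c : Quaternion ℝ → ℂ := fun q => ⟨q.re, q.imI⟩
  let d : Quaternion ℝ → ℂ := fun q => ⟨q.imJ, q.imK⟩
  letI : SMul (Quaternion ℝ) V := ⟨fun q v => c q • v + d q • J v⟩
  have hsmul : ∀ (q : Quaternion ℝ) (v : V), q • v = c q • v + d q • J v := fun _ _ => rfl
  have hcm : ∀ q r : Quaternion ℝ, c (q * r) = c q * c r - d q * (starRingEnd ℂ) (d r) := by
    intro q r
    apply Complex.ext <;>
      simp [c, d, Complex.ext_iff, Quaternion.re_mul, Quaternion.imI_mul] <;> ring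
  have hdm : ∀ q r : Quaternion ℝ, d (q * r) = c q * d r + d q * (starRingEnd ℂ) (c r) := by
    intro q r
    apply Complex.ext <;>
      simp [c, d, Complex.ext_iff, Quaternion.imJ_mul, Quaternion.imK_mul] <;> ring
  letI : MulAction (Quaternion ℝ) V :=
    { one_smul := by intro v; rw [hsmul]; change ((⟨1,0⟩:ℂ)) • v + ((⟨0,0⟩:ℂ)) • J v = v; simp [c, d, show ((⟨1,0⟩:ℂ)) = 1 from rfl, show ((⟨0,0⟩:ℂ)) = 0 from rfl]
      mul_smul := by
        intro q r v
        rw [hsmul, hsmul, hsmul, hcm, hdm, map_add, hJc, hJc, hJ2]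
        simp only [smul_add, smul_smul, smul_neg, sub_smul, add_smul]
        abel }
  letI : DistribMulAction (Quaternion ℝ) V :=
    { smul_zero := by intro q; rw [hsmul]; simp
      smul_add := by intro q u v; rw [hsmul, hsmul, hsmul]; simp only [map_add, smul_add]; abel }
  letI : Module (Quaternion ℝ) V :=
    { add_smul := by
        intro q r v
        rw [hsmul, hsmul, hsmul]
        have : c (q + r) = c q + c r := by apply Complex.ext <;> simp [c]
        have : d (q + r) = d q + d r := by apply Complex.ext <;> simp [d]
        simp_all [add_smul]
        abel
      zero_smul := by intro v; rw [hsmul]; change ((⟨0,0⟩:ℂ)) • v + ((⟨0,0⟩:ℂ)) • J v = 0; simp [c, d, show ((⟨0,0⟩:ℂ)) = 0 from rfl] }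
  haveI : IsScalarTower ℝ (Quaternion ℝ) V := ⟨by
    intro r q v
    rw [hsmul, hsmul]
    have h1 : c (r • q) = (r : ℂ) * c q := by apply Complex.ext <;> simp [c]
    have h2 : d (r • q) = (r : ℂ) * d q := by apply Complex.ext <;> simp [d]
    rw [h1, h2, smul_add, ← smul_smul, ← smul_smul, Complex.coe_smul, Complex.coe_smul]⟩
  have h1 : Module.finrank ℝ (Quaternion ℝ) * Module.finrank (Quaternion ℝ) V
      = Module.finrank ℝ V := Module.finrank_mul_finrank ℝ (Quaternion ℝ) V
  have h2 : Module.finrank ℝ ℂ * Module.finrank ℂ V = Module.finrank ℝ V :=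
    Module.finrank_mul_finrank ℝ ℂ V
  rw [Quaternion.finrank_eq_four] at h1
  rw [Complex.finrank_real_complex] at h2
  exact ⟨Module.finrank (Quaternion ℝ) V, by omega⟩

/-- If `V` and `W` are finite-dimensional complex vector spaces with quaternionic
structures `JV`, `JW`, and `f : V →ₗ[ℂ] W` intertwines them, then the kernel and the
cokernel of `f` have even complex dimension, and in particular the index of `f`
is an even integer. -/
theorem even_index_of_quaternionic_linear
    (V W : Type*) [AddCommGroup V] [Module ℂ V] [FiniteDimensional ℂ V]
    [AddCommGroup W] [Module ℂ W] [FiniteDimensional ℂ W]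
    (JV : V →ₗ[ℝ] V) (JW : W →ₗ[ℝ] W)
    (hJV : ∀ v : V, JV (JV v) = -v)
    (hJVconj : ∀ (z : ℂ) (v : V), JV (z • v) = (starRingEnd ℂ z) • JV v)
    (hJW : ∀ w : W, JW (JW w) = -w)
    (hJWconj : ∀ (z : ℂ) (w : W), JW (z • w) = (starRingEnd ℂ z) • JW w)
    (f : V →ₗ[ℂ] W)
    (hf : ∀ v : V, f (JV v) = JW (f v)) :
    Even (Module.finrank ℂ (LinearMap.ker f)) ∧
    Even (Module.finrank ℂ (W ⧸ LinearMap.range f)) ∧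
    Even ((Module.finrank ℂ (LinearMap.ker f) : ℤ) -
      (Module.finrank ℂ (W ⧸ LinearMap.range f) : ℤ)) := by
  have hmem : ∀ v : V, v ∈ LinearMap.ker f → JV v ∈ LinearMap.ker f := by
    intro v hv
    simp only [LinearMap.mem_ker] at hv ⊢
    rw [hf, hv]; exact JW.map_zero
  let Jker : (LinearMap.ker f) →ₗ[ℝ] (LinearMap.ker f) :=
    { toFun := fun v => ⟨JV v, hmem v v.2⟩
      map_add' := fun u v => Subtype.ext (JV.map_add u v)
      map_smul' := fun r v => Subtype.ext (JV.map_smul r v) }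
  have hk : Even (Module.finrank ℂ (LinearMap.ker f)) := by
    apply even_finrank_of_quaternionic Jker
    · intro v
      exact Subtype.ext (hJV v)
    · intro z v
      exact Subtype.ext (hJVconj z v)
  have hV : Even (Module.finrank ℂ V) := even_finrank_of_quaternionic JV hJV hJVconj
  have hW : Even (Module.finrank ℂ W) := even_finrank_of_quaternionic JW hJW hJWconj
  have e1 : Module.finrank ℂ (W ⧸ LinearMap.range f) +
      Module.finrank ℂ (LinearMap.range f) = Module.finrank ℂ W :=
    Submodule.finrank_quotient_add_finrank _
  have e2 : Module.finrank ℂ (LinearMap.range f) +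
      Module.finrank ℂ (LinearMap.ker f) = Module.finrank ℂ V :=
    LinearMap.finrank_range_add_finrank_ker f
  have hcok : Even (Module.finrank ℂ (W ⧸ LinearMap.range f)) := by
    rw [Nat.even_iff] at hk hV hW ⊢
    omega
  refine ⟨hk, hcok, ?_⟩
  exact (Int.even_sub.mpr (by simp [Int.even_coe_nat, hk, hcok]))
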